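/- arXiv:1004.4262 — 6 statements merged into one kernel-verified Lean document; each statement's English description precedes it below -/
import Mathlib

section
/- Let H be a real Hilbert space and G : H → H a bounded linear operator with adjoint G*, and set S := -(G + G*)/2. Let f ∈ H, let λ, λ' > 0, and suppose u, u' ∈ H satisfy the resolvent equations λ·u - G u = f and λ'·u' - G u' = f. Then (λ + λ')⟨u, u'⟩ = ⟨S(u - u'), u - u'⟩ + λ‖u‖² + λ'‖u'‖². -/
open scoped RealInnerProductSpace

theorem stmt_0
    {H : Type*} [NormedAddCommGroup H] [InnerProductSpace ℝ H] [CompleteSpace H]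
    (G : H →L[ℝ] H) (S : H →L[ℝ] H)
    (hS : S = -(2 : ℝ)⁻¹ • (G + ContinuousLinearMap.adjoint G))
    (f u u' : H) (l l' : ℝ) (hl : 0 < l) (hl' : 0 < l')
    (hu : l • u - G u = f) (hu' : l' • u' - G u' = f) :
    (l + l') * ⟪u, u'⟫
      = ⟪S (u - u'), u - u'⟫ + l * ‖u‖ ^ 2 + l' * ‖u'‖ ^ 2 := by
  have hGu : G u = l • u - f := by rw [← hu]; abel
  have hGu' : G u' = l' • u' - f := by rw [← hu']; abel
  have hSx : ⟪S (u - u'), u - u'⟫ = -⟪G (u - u'), u - u'⟫ := by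
    rw [hS]
    simp only [ContinuousLinearMap.neg_apply, ContinuousLinearMap.smul_apply,
      ContinuousLinearMap.add_apply, inner_neg_left, inner_smul_left, inner_add_left,
      ContinuousLinearMap.adjoint_inner_left, real_inner_comm (u - u') (G (u - u')), starRingEnd_apply, star_trivial]
    ring
  have hGsub : G (u - u') = l • u - l' • u' := by
    rw [map_sub, hGu, hGu']; abel
  rw [hSx, hGsub]
  simp only [inner_sub_left, inner_sub_right, inner_smul_left, inner_smul_right,
    real_inner_comm u' u, real_inner_self_eq_norm_sq, starRingEnd_apply, star_trivial]
  ring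
end

section
/- Let d ≥ 3 be an integer, k ∈ {1,…,d}, and for p = (p_1,…,p_d) ∈ ℝ^d define D̂(p) := ∑_{l=1}^d (1 - cos p_l). Then there exists a finite constant C such that for every q ∈ ℝ^d, ∫_{[-π,π]^d} (1 - cos p_k)/(D̂(p) · D̂(p+q)) dp ≤ C, where the integrand is defined to be 0 on the Lebesgue-null set where D̂(p)·D̂(p+q) = 0. -/
open MeasureTheory Real

namespace Stmt6Aux

noncomputable def Dfun (d : ℕ) : (Fin d → ℝ) → ℝ := fun p => ∑ l, (1 - Real.cos (p l))

lemma Dfun_cont (d : ℕ) : Continuous (Dfun d) := by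
  unfold Dfun; exact continuous_finset_sum _ fun l _ => by fun_prop

lemma Dfun_nonneg {d : ℕ} (p : Fin d → ℝ) : 0 ≤ Dfun d p :=
  Finset.sum_nonneg fun l _ => by nlinarith [Real.cos_le_one (p l)]

lemma term_le_Dfun {d : ℕ} (p : Fin d → ℝ) (k : Fin d) : 1 - Real.cos (p k) ≤ Dfun d p :=
  Finset.single_le_sum (f := fun l => 1 - Real.cos (p l))
    (fun l _ => by simpa using Real.cos_le_one (p l)) (Finset.mem_univ k)

lemma lintegral_translate {d : ℕ} (f : (Fin d → ℝ) → ENNReal) (q a b : Fin d → ℝ) :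
    ∫⁻ p in Set.Icc a b, f (p + q) = ∫⁻ u in Set.Icc (a + q) (b + q), f u := by
  have h := (measurePreserving_add_right (volume : Measure (Fin d → ℝ)) q).setLIntegral_comp_preimage_emb
    (MeasurableEquiv.addRight q).measurableEmbedding f (Set.Icc (a + q) (b + q))
  have hpre : (fun p : Fin d → ℝ => p + q) ⁻¹' Set.Icc (a + q) (b + q) = Set.Icc a b := by
    ext p
    simp only [Set.mem_preimage, Set.mem_Icc, Pi.le_def, Pi.add_apply]
    constructor
    · rintro ⟨h1, h2⟩
      exact ⟨fun l => by have := h1 l; linarith, fun l => by have := h2 l; linarith⟩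
    · rintro ⟨h1, h2⟩
      exact ⟨fun l => by have := h1 l; linarith, fun l => by have := h2 l; linarith⟩
  rw [hpre] at h
  exact h

lemma Dfun_periodic {d : ℕ} (p : Fin d → ℝ) (m : Fin d → ℤ) :
    Dfun d (p + fun l => ((m l : ℝ) * (2 * π))) = Dfun d p := by
  unfold Dfun
  refine Finset.sum_congr rfl fun l _ => ?_
  simp [Real.cos_add_int_mul_two_pi]

lemma key_finite {d : ℕ} (hd : 3 ≤ d) :
    ∫⁻ p in Set.Icc (fun _ : Fin d => -π) (fun _ : Fin d => π),
      ENNReal.ofReal (1 / Dfun d p) < ⊤ := by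
  set cube : Set (Fin d → ℝ) := Set.Icc (fun _ : Fin d => -π) (fun _ : Fin d => π) with hcube
  set μ : Measure (Fin d → ℝ) := volume.restrict cube with hμ
  have hDm : Measurable (Dfun d) := (Dfun_cont d).measurable
  have hfm : AEMeasurable (fun p => 1 / Dfun d p) μ :=
    (measurable_const.div hDm).aemeasurable
  have hnn : 0 ≤ᵐ[μ] fun p => 1 / Dfun d p :=
    Filter.Eventually.of_forall fun p => div_nonneg zero_le_one (Dfun_nonneg p)
  have hlc := lintegral_eq_lintegral_meas_le μ hnn hfm
  show ∫⁻ p, ENNReal.ofReal (1 / Dfun d p) ∂μ < ⊤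
  rw [hlc]
  have hcubem : MeasurableSet cube := measurableSet_Icc
  -- uniform bound by volume of cube
  have hb1 : ∀ t : ℝ, μ {a | t ≤ 1 / Dfun d a} ≤ ENNReal.ofReal (2 * π) ^ d := by
    intro t
    calc μ {a | t ≤ 1 / Dfun d a} ≤ μ Set.univ := measure_mono (Set.subset_univ _)
    _ = volume cube := by rw [hμ, Measure.restrict_apply_univ]
    _ = ENNReal.ofReal (2 * π) ^ d := by
        rw [hcube, Real.volume_Icc_pi]
        simp [Finset.prod_const, two_mul]
  -- decay bound for t ≥ 1
  have hb2 : ∀ t : ℝ, 1 < t → μ {a | t ≤ 1 / Dfun d a} ≤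
      ENNReal.ofReal ((2 * π) ^ d * t ^ ((-(1 : ℝ) / 2) * d)) := by
    intro t ht
    have ht0 : (0 : ℝ) < t := lt_trans one_pos ht
    have hsub : {a : Fin d → ℝ | t ≤ 1 / Dfun d a} ∩ cube ⊆
        Set.Icc (fun _ : Fin d => -(π / Real.sqrt t)) (fun _ : Fin d => π / Real.sqrt t) := by
      rintro a ⟨ha1, ha2⟩
      have ha1' : t ≤ 1 / Dfun d a := ha1
      have haD : 0 < Dfun d a := by
        rcases (Dfun_nonneg a).lt_or_eq with h | h
        · exact h
        · exfalso; rw [← h] at ha1'; norm_num at ha1'; linarith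
      have hDle : Dfun d a ≤ 1 / t := by
        rw [le_div_iff₀ ht0, mul_comm]
        calc t * Dfun d a ≤ (1 / Dfun d a) * Dfun d a :=
              mul_le_mul_of_nonneg_right ha1' haD.le
        _ = 1 := by field_simp
      rw [hcube, Set.mem_Icc, Pi.le_def, Pi.le_def] at ha2
      rw [Set.mem_Icc, Pi.le_def, Pi.le_def]
      have key : ∀ l, (a l) ^ 2 ≤ (π / Real.sqrt t) ^ 2 := by
        intro l
        have habs : |a l| ≤ π := abs_le.2 ⟨ha2.1 l, ha2.2 l⟩
        have hcos := Real.cos_le_one_sub_mul_cos_sq habs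
        have hterm : 2 / π ^ 2 * (a l) ^ 2 ≤ 1 - Real.cos (a l) := by linarith
        have hsum : 1 - Real.cos (a l) ≤ Dfun d a := term_le_Dfun a l
        have hπ : (0 : ℝ) < π := Real.pi_pos
        have heqd : 2 / π ^ 2 * (a l) ^ 2 = (a l) ^ 2 / (π ^ 2 / 2) := by
          field_simp
        rw [heqd, div_le_iff₀ (by positivity : (0:ℝ) < π ^ 2 / 2)] at hterm
        have h1 : (a l) ^ 2 ≤ π ^ 2 / (2 * t) := by
          calc (a l) ^ 2 ≤ (1 - Real.cos (a l)) * (π ^ 2 / 2) := hterm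
          _ ≤ (1 / t) * (π ^ 2 / 2) := by
              apply mul_le_mul_of_nonneg_right (le_trans hsum hDle) (by positivity)
          _ = π ^ 2 / (2 * t) := by field_simp
        have h2 : (π / Real.sqrt t) ^ 2 = π ^ 2 / t := by
          rw [div_pow, Real.sq_sqrt ht0.le]
        rw [h2]
        calc (a l) ^ 2 ≤ π ^ 2 / (2 * t) := h1
        _ ≤ π ^ 2 / t := by
            apply div_le_div_of_nonneg_left (by positivity) ht0; linarith
      have hr : 0 ≤ π / Real.sqrt t := by positivity
      constructor
      · intro l
        have := key l; nlinarith [sq_nonneg (a l + π / Real.sqrt t)]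
      · intro l
        have := key l; nlinarith [sq_nonneg (a l - π / Real.sqrt t)]
    calc μ {a | t ≤ 1 / Dfun d a}
        = volume ({a : Fin d → ℝ | t ≤ 1 / Dfun d a} ∩ cube) := by
          rw [hμ, Measure.restrict_apply' hcubem]
      _ ≤ volume (Set.Icc (fun _ : Fin d => -(π / Real.sqrt t))
            (fun _ : Fin d => π / Real.sqrt t)) := measure_mono hsub
      _ = ENNReal.ofReal (2 * (π / Real.sqrt t)) ^ d := by
          rw [Real.volume_Icc_pi]
          simp [Finset.prod_const]
          congr 1
          ring_nf
          rw [ENNReal.ofReal_mul (by positivity), ENNReal.ofReal_ofNat]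
      _ ≤ ENNReal.ofReal ((2 * π) ^ d * t ^ ((-(1 : ℝ) / 2) * d)) := by
          have hx : (0 : ℝ) ≤ 2 * (π / Real.sqrt t) := by positivity
          rw [← ENNReal.ofReal_pow hx]
          apply ENNReal.ofReal_le_ofReal
          have hst : Real.sqrt t = t ^ ((1 : ℝ) / 2) := Real.sqrt_eq_rpow t
          have heq : 2 * (π / Real.sqrt t) = 2 * π * t ^ (-(1 : ℝ) / 2) := by
            rw [hst, div_eq_mul_inv, ← Real.rpow_neg ht0.le]
            norm_num
            ring
          rw [heq, mul_pow, ← Real.rpow_natCast (t ^ (-(1 : ℝ) / 2)) d,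
            ← Real.rpow_mul ht0.le]
  -- split the integral
  calc ∫⁻ t in Set.Ioi (0 : ℝ), μ {a | t ≤ 1 / Dfun d a}
      ≤ ∫⁻ t in Set.Ioc (0 : ℝ) 1 ∪ Set.Ioi 1, μ {a | t ≤ 1 / Dfun d a} :=
        lintegral_mono_set Set.Ioi_subset_Ioc_union_Ioi
    _ ≤ (∫⁻ t in Set.Ioc (0 : ℝ) 1, μ {a | t ≤ 1 / Dfun d a})
        + ∫⁻ t in Set.Ioi (1 : ℝ), μ {a | t ≤ 1 / Dfun d a} := lintegral_union_le _ _ _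
    _ < ⊤ := by
      apply ENNReal.add_lt_top.2
      constructor
      · calc ∫⁻ t in Set.Ioc (0 : ℝ) 1, μ {a | t ≤ 1 / Dfun d a}
            ≤ ∫⁻ _ in Set.Ioc (0 : ℝ) 1, ENNReal.ofReal (2 * π) ^ d :=
              setLIntegral_mono' measurableSet_Ioc fun t _ => hb1 t
          _ = ENNReal.ofReal (2 * π) ^ d * volume (Set.Ioc (0 : ℝ) 1) := setLIntegral_const _ _
          _ < ⊤ := by
              apply ENNReal.mul_lt_top
              · exact ENNReal.pow_lt_top ENNReal.ofReal_lt_top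
              · rw [Real.volume_Ioc]; exact ENNReal.ofReal_lt_top
      · have hint : IntegrableOn (fun t : ℝ => (2 * π) ^ d * t ^ ((-(1 : ℝ) / 2) * d))
            (Set.Ioi (1 : ℝ)) := by
          apply Integrable.const_mul
          apply integrableOn_Ioi_rpow_of_lt _ one_pos
          have : (3 : ℝ) ≤ (d : ℝ) := by exact_mod_cast hd
          nlinarith
        calc ∫⁻ t in Set.Ioi (1 : ℝ), μ {a | t ≤ 1 / Dfun d a}
            ≤ ∫⁻ t in Set.Ioi (1 : ℝ),
                ENNReal.ofReal ((2 * π) ^ d * t ^ ((-(1 : ℝ) / 2) * d)) :=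
              setLIntegral_mono' measurableSet_Ioi fun t ht => hb2 t ht
          _ < ⊤ := hint.setLIntegral_lt_top

end Stmt6Aux

open Stmt6Aux in
theorem stmt_6
    (d : ℕ) (hd : 3 ≤ d) (k : Fin d)
    (D : (Fin d → ℝ) → ℝ) (hD : ∀ p, D p = ∑ l, (1 - Real.cos (p l))) :
    ∃ C : ℝ, ∀ q : Fin d → ℝ,
      (∫⁻ p in Set.Icc (fun _ : Fin d => -π) (fun _ : Fin d => π),
          ENNReal.ofReal
            (if D p * D (p + q) = 0 then 0
             else (1 - Real.cos (p k)) / (D p * D (p + q))))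
        ≤ ENNReal.ofReal C := by
  have hDfn : D = Dfun d := by funext p; rw [hD p]; rfl
  subst hDfn
  set cube : Set (Fin d → ℝ) := Set.Icc (fun _ : Fin d => -π) (fun _ : Fin d => π) with hcube
  set I : ENNReal := ∫⁻ p in cube, ENNReal.ofReal (1 / Dfun d p) with hI
  have hIfin : I < ⊤ := key_finite hd
  refine ⟨(3 : ℝ) ^ d * I.toReal, ?_⟩
  intro q
  -- reduce q modulo 2π
  set q' : Fin d → ℝ := fun l => q l - (round (q l / (2 * π)) : ℤ) * (2 * π) with hq'
  have hπ : (0 : ℝ) < π := Real.pi_pos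
  have hq'bd : ∀ l, -π ≤ q' l ∧ q' l ≤ π := by
    intro l
    have h := abs_sub_round (q l / (2 * π))
    have h2 : |q l - (round (q l / (2 * π)) : ℤ) * (2 * π)| ≤ π := by
      have : q l - (round (q l / (2 * π)) : ℤ) * (2 * π)
          = (q l / (2 * π) - (round (q l / (2 * π)) : ℤ)) * (2 * π) := by
        field_simp
      rw [this, abs_mul, abs_of_pos (by positivity : (0:ℝ) < 2 * π)]
      calc |q l / (2 * π) - (round (q l / (2 * π)) : ℤ)| * (2 * π)
          ≤ (1 / 2) * (2 * π) := by
            apply mul_le_mul_of_nonneg_right h (by positivity)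
        _ = π := by ring
    exact abs_le.1 h2
  have hshift : ∀ p : Fin d → ℝ, Dfun d (p + q) = Dfun d (p + q') := by
    intro p
    have : p + q = (p + q') + fun l => ((round (q l / (2 * π)) : ℤ) : ℝ) * (2 * π) := by
      funext l
      simp [hq', Pi.add_apply]
      ring
    rw [this, Dfun_periodic (p + q') (fun l => round (q l / (2 * π)))]
  -- pointwise bound
  have hpt : ∀ p : Fin d → ℝ,
      ENNReal.ofReal
        (if Dfun d p * Dfun d (p + q) = 0 then 0
         else (1 - Real.cos (p k)) / (Dfun d p * Dfun d (p + q)))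
      ≤ ENNReal.ofReal (1 / Dfun d (p + q')) := by
    intro p
    apply ENNReal.ofReal_le_ofReal
    rw [hshift p]
    split_ifs with h
    · exact div_nonneg zero_le_one (Dfun_nonneg _)
    · have h1 : Dfun d p ≠ 0 := fun hc => h (by rw [hc]; ring)
      have h2 : Dfun d (p + q') ≠ 0 := fun hc => h (by rw [hc]; ring)
      have hp1 : 0 < Dfun d p := (Dfun_nonneg p).lt_of_ne (Ne.symm h1)
      have hp2 : 0 < Dfun d (p + q') := (Dfun_nonneg _).lt_of_ne (Ne.symm h2)
      rw [div_le_div_iff₀ (by positivity) hp2, one_mul]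
      have := term_le_Dfun p k
      nlinarith
  have step1 : (∫⁻ p in cube,
        ENNReal.ofReal
          (if Dfun d p * Dfun d (p + q) = 0 then 0
           else (1 - Real.cos (p k)) / (Dfun d p * Dfun d (p + q))))
      ≤ ∫⁻ p in cube, ENNReal.ofReal (1 / Dfun d (p + q')) :=
    lintegral_mono fun p => hpt p
  -- translation
  have step2 : (∫⁻ p in cube, ENNReal.ofReal (1 / Dfun d (p + q')))
      = ∫⁻ u in Set.Icc ((fun _ : Fin d => -π) + q') ((fun _ : Fin d => π) + q'),
          ENNReal.ofReal (1 / Dfun d u) :=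
    lintegral_translate (fun u => ENNReal.ofReal (1 / Dfun d u)) q' _ _
  -- covering
  set v : (Fin d → Fin 3) → (Fin d → ℝ) :=
    fun σ l => (((σ l : ℤ) - 1 : ℤ) : ℝ) * (2 * π) with hv
  have hcover : Set.Icc ((fun _ : Fin d => -π) + q') ((fun _ : Fin d => π) + q')
      ⊆ ⋃ σ : Fin d → Fin 3, Set.Icc ((fun _ : Fin d => -π) + v σ) ((fun _ : Fin d => π) + v σ) := by
    intro u hu
    rw [Set.mem_Icc, Pi.le_def, Pi.le_def] at hu
    simp only [Pi.add_apply] at hu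
    refine Set.mem_iUnion.2 ⟨fun l => if u l < -π then 0 else if u l ≤ π then 1 else 2, ?_⟩
    rw [Set.mem_Icc, Pi.le_def, Pi.le_def]
    have hb : ∀ l, -2 * π ≤ u l ∧ u l ≤ 2 * π := by
      intro l
      have h1 := hu.1 l
      have h2 := hu.2 l
      have h3 := (hq'bd l).1
      have h4 := (hq'bd l).2
      constructor <;> linarith
    constructor <;> intro l <;>
      simp only [Pi.add_apply, hv] <;>
      rcases lt_or_ge (u l) (-π) with h1 | h1
    · rw [if_pos h1]
      norm_num
      linarith [(hb l).1]
    · rw [if_neg (not_lt.2 h1)]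
      rcases le_or_gt (u l) π with h2 | h2
      · rw [if_pos h2]; norm_num; linarith
      · rw [if_neg (not_le.2 h2)]; norm_num; linarith
    · rw [if_pos h1]
      norm_num
      linarith
    · rw [if_neg (not_lt.2 h1)]
      rcases le_or_gt (u l) π with h2 | h2
      · rw [if_pos h2]; norm_num; linarith
      · rw [if_neg (not_le.2 h2)]; norm_num; linarith [(hb l).2]
  have step3 : (∫⁻ u in Set.Icc ((fun _ : Fin d => -π) + q') ((fun _ : Fin d => π) + q'),
        ENNReal.ofReal (1 / Dfun d u))
      ≤ ∑' σ : Fin d → Fin 3,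
          ∫⁻ u in Set.Icc ((fun _ : Fin d => -π) + v σ) ((fun _ : Fin d => π) + v σ),
            ENNReal.ofReal (1 / Dfun d u) :=
    le_trans (lintegral_mono_set hcover) (lintegral_iUnion_le _ _)
  have step4 : ∀ σ : Fin d → Fin 3,
      (∫⁻ u in Set.Icc ((fun _ : Fin d => -π) + v σ) ((fun _ : Fin d => π) + v σ),
        ENNReal.ofReal (1 / Dfun d u)) = I := by
    intro σ
    rw [← lintegral_translate (fun u => ENNReal.ofReal (1 / Dfun d u)) (v σ)]
    rw [hI]
    apply lintegral_congr
    intro p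
    congr 1
    rw [show p + v σ = p + fun l => ((((σ l : ℤ) - 1 : ℤ) : ℝ) * (2 * π)) from rfl]
    rw [Dfun_periodic p (fun l => (σ l : ℤ) - 1)]
  have step5 : (∑' σ : Fin d → Fin 3,
      (∫⁻ u in Set.Icc ((fun _ : Fin d => -π) + v σ) ((fun _ : Fin d => π) + v σ),
        ENNReal.ofReal (1 / Dfun d u))) = (3 ^ d : ℕ) * I := by
    rw [tsum_congr step4, tsum_fintype]
    simp only [Finset.sum_const, Finset.card_univ, Fintype.card_fun, Fintype.card_fin,
      nsmul_eq_mul]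
  have hC : ((3 ^ d : ℕ) : ENNReal) * I = ENNReal.ofReal ((3 : ℝ) ^ d * I.toReal) := by
    rw [ENNReal.ofReal_mul (by positivity), ENNReal.ofReal_toReal hIfin.ne]
    congr 1
    rw [← ENNReal.ofReal_natCast]
    congr 1
    push_cast
    ring
  calc (∫⁻ p in cube,
        ENNReal.ofReal
          (if Dfun d p * Dfun d (p + q) = 0 then 0
           else (1 - Real.cos (p k)) / (Dfun d p * Dfun d (p + q))))
      ≤ ∫⁻ p in cube, ENNReal.ofReal (1 / Dfun d (p + q')) := step1
    _ = _ := step2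
    _ ≤ _ := step3
    _ = (3 ^ d : ℕ) * I := step5
    _ = ENNReal.ofReal ((3 : ℝ) ^ d * I.toReal) := hC
end

section
/- Let d ≥ 1 and n ≥ 0 be integers. Let w : ℝ^d → [0,∞] be measurable, let g : [-π,π]^d → ℂ and b : [-π,π]^d → [0,∞] be measurable, and let û : ([-π,π]^d)^n → ℂ be a measurable function that is symmetric, i.e. û(p_{σ(1)},…,p_{σ(n)}) = û(p_1,…,p_n) for every permutation σ of {1,…,n}. Then ∫_{([-π,π]^d)^{n+1}} w(∑_{m=1}^{n+1} p_m) · |∑_{m=1}^{n+1} g(p_m) û(p_1,…,p_{m-1},p_{m+1},…,p_{n+1})|² · ∏_{m=1}^{n+1} b(p_m) dp ≤ (n+1)² ∫_{([-π,π]^d)^{n+1}} w(∑_{m=1}^{n+1} p_m) · |g(p_{n+1})|² · |û(p_1,…,p_n)|² · ∏_{m=1}^{n+1} b(p_m) dp, both sides taking values in [0,∞]. -/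
open MeasureTheory Real
open scoped ENNReal

private lemma cs_nnreal {ι : Type*} [Fintype ι] (a : ι → NNReal) :
    (∑ i, a i) ^ 2 ≤ (Fintype.card ι : NNReal) * ∑ i, (a i) ^ 2 := by
  rw [← NNReal.coe_le_coe]
  push_cast
  simpa using sq_sum_le_card_mul_sum_sq (s := Finset.univ) (f := fun i => (a i : ℝ))

private lemma cs_ennreal {ι : Type*} [Fintype ι] (a : ι → NNReal) :
    ((∑ i, a i : NNReal) : ℝ≥0∞) ^ 2 ≤ (Fintype.card ι : ℝ≥0∞) * ∑ i, ((a i : ℝ≥0∞)) ^ 2 := by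
  have := cs_nnreal a
  have h : (((∑ i, a i) ^ 2 : NNReal) : ℝ≥0∞)
      ≤ (((Fintype.card ι : NNReal) * ∑ i, (a i) ^ 2 : NNReal) : ℝ≥0∞) :=
    ENNReal.coe_le_coe.mpr this
  push_cast at h
  simpa using h

theorem stmt_7
    (d n : ℕ) (hd : 1 ≤ d)
    (w : (Fin d → ℝ) → ℝ≥0∞) (hw : Measurable w)
    (g : (Fin d → ℝ) → ℂ) (hg : Measurable g)
    (b : (Fin d → ℝ) → ℝ≥0∞) (hb : Measurable b)
    (u : (Fin n → Fin d → ℝ) → ℂ) (hu : Measurable u)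
    (hsymm : ∀ (σ : Equiv.Perm (Fin n)) (p : Fin n → Fin d → ℝ), u (p ∘ σ) = u p) :
    (∫⁻ p in Set.univ.pi
        (fun _ : Fin (n + 1) => Set.Icc (fun _ : Fin d => -π) (fun _ : Fin d => π)),
      w (∑ m, p m)
        * (‖∑ m : Fin (n + 1), g (p m) * u (p ∘ m.succAbove)‖₊ : ℝ≥0∞) ^ 2
        * ∏ m, b (p m))
      ≤ ((n + 1 : ℕ) : ℝ≥0∞) ^ 2 *
        ∫⁻ p in Set.univ.pi
          (fun _ : Fin (n + 1) => Set.Icc (fun _ : Fin d => -π) (fun _ : Fin d => π)),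
        w (∑ m, p m)
          * (‖g (p (Fin.last n))‖₊ : ℝ≥0∞) ^ 2
          * (‖u (p ∘ Fin.castSucc)‖₊ : ℝ≥0∞) ^ 2
          * ∏ m, b (p m) := by
  classical
  set S : Set (Fin (n + 1) → (Fin d → ℝ)) :=
    Set.univ.pi (fun _ : Fin (n + 1) => Set.Icc (fun _ : Fin d => -π) (fun _ : Fin d => π))
    with hS
  set F : (Fin (n + 1) → (Fin d → ℝ)) → ℝ≥0∞ := fun p =>
    w (∑ m, p m) * (‖g (p (Fin.last n))‖₊ : ℝ≥0∞) ^ 2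
      * (‖u (p ∘ Fin.castSucc)‖₊ : ℝ≥0∞) ^ 2 * ∏ m, b (p m) with hF
  set H : Fin (n + 1) → (Fin (n + 1) → (Fin d → ℝ)) → ℝ≥0∞ := fun m p =>
    w (∑ i, p i) * (‖g (p m) * u (p ∘ m.succAbove)‖₊ : ℝ≥0∞) ^ 2 * ∏ i, b (p i) with hH
  have hmeas_sum : Measurable fun p : Fin (n + 1) → (Fin d → ℝ) => ∑ i, p i :=
    Finset.measurable_sum Finset.univ fun i _ => measurable_pi_apply i
  have hmeas_prod : Measurable fun p : Fin (n + 1) → (Fin d → ℝ) => ∏ i, b (p i) :=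
    Finset.measurable_prod Finset.univ fun i _ => hb.comp (measurable_pi_apply i)
  have hmeasH : ∀ m, Measurable (H m) := by
    intro m
    refine Measurable.mul (Measurable.mul (hw.comp hmeas_sum) ?_) hmeas_prod
    refine Measurable.pow ?_ measurable_const
    refine Measurable.coe_nnreal_ennreal (Measurable.nnnorm ?_)
    exact (hg.comp (measurable_pi_apply m)).mul
      (hu.comp (measurable_pi_lambda _ fun i => measurable_pi_apply _))
  -- pointwise Cauchy-Schwarz
  have step1 : ∀ p : Fin (n + 1) → (Fin d → ℝ),
      w (∑ m, p m) * (‖∑ m : Fin (n + 1), g (p m) * u (p ∘ m.succAbove)‖₊ : ℝ≥0∞) ^ 2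
        * ∏ m, b (p m)
      ≤ ((n + 1 : ℕ) : ℝ≥0∞) * ∑ m, H m p := by
    intro p
    have hnorm : (‖∑ m : Fin (n + 1), g (p m) * u (p ∘ m.succAbove)‖₊ : ℝ≥0∞) ^ 2
        ≤ ((n + 1 : ℕ) : ℝ≥0∞) * ∑ m : Fin (n + 1),
            (‖g (p m) * u (p ∘ m.succAbove)‖₊ : ℝ≥0∞) ^ 2 := by
      calc (‖∑ m : Fin (n + 1), g (p m) * u (p ∘ m.succAbove)‖₊ : ℝ≥0∞) ^ 2
          ≤ ((∑ m : Fin (n + 1), ‖g (p m) * u (p ∘ m.succAbove)‖₊ : NNReal) : ℝ≥0∞) ^ 2 := by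
            gcongr
            exact_mod_cast nnnorm_sum_le _ _
        _ ≤ (Fintype.card (Fin (n + 1)) : ℝ≥0∞) * ∑ m : Fin (n + 1),
              ((‖g (p m) * u (p ∘ m.succAbove)‖₊ : ℝ≥0∞)) ^ 2 :=
            cs_ennreal _
        _ = ((n + 1 : ℕ) : ℝ≥0∞) * ∑ m : Fin (n + 1),
              (‖g (p m) * u (p ∘ m.succAbove)‖₊ : ℝ≥0∞) ^ 2 := by
            simp [Fintype.card_fin]
    calc w (∑ m, p m) * (‖∑ m : Fin (n + 1), g (p m) * u (p ∘ m.succAbove)‖₊ : ℝ≥0∞) ^ 2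
          * ∏ m, b (p m)
        ≤ w (∑ m, p m) * (((n + 1 : ℕ) : ℝ≥0∞) * ∑ m : Fin (n + 1),
              (‖g (p m) * u (p ∘ m.succAbove)‖₊ : ℝ≥0∞) ^ 2) * ∏ m, b (p m) := by
          gcongr
      _ = ((n + 1 : ℕ) : ℝ≥0∞) * ∑ m, H m p := by
          simp only [hH, Finset.mul_sum, Finset.sum_mul]
          exact Finset.sum_congr rfl fun i _ => by ring
  -- key step: each term equals the RHS integral by symmetry of the measure
  have key : ∀ m : Fin (n + 1), ∫⁻ p in S, H m p = ∫⁻ p in S, F p := by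
    intro m
    set e : Fin (n + 1) ≃ Fin (n + 1) :=
      (finSuccEquiv' (Fin.last n)).trans (finSuccEquiv' m).symm with he
    set E : (Fin (n + 1) → (Fin d → ℝ)) ≃ᵐ (Fin (n + 1) → (Fin d → ℝ)) :=
      MeasurableEquiv.piCongrLeft (fun _ => Fin d → ℝ) e.symm with hE
    have hEapp : ∀ (p : Fin (n + 1) → (Fin d → ℝ)) (i : Fin (n + 1)), E p i = p (e i) := by
      intro p i
      have h := Equiv.piCongrLeft_apply_apply (fun _ : Fin (n + 1) => Fin d → ℝ)
        (e := e.symm) p (e i)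
      rw [Equiv.symm_apply_apply] at h
      simpa [hE, MeasurableEquiv.coe_piCongrLeft] using h
    have helast : e (Fin.last n) = m := by
      simp [he, finSuccEquiv'_at, finSuccEquiv'_symm_none]
    have hecast : ∀ i : Fin n, e (Fin.castSucc i) = m.succAbove i := by
      intro i
      simp [he, ← Fin.succAbove_last, finSuccEquiv'_succAbove, finSuccEquiv'_symm_some]
    have hpre : E ⁻¹' S = S := by
      ext p
      simp only [hS, Set.mem_preimage, Set.mem_pi, Set.mem_univ, forall_true_left]
      constructor
      · intro h i
        have := h (e.symm i)
        rwa [hEapp, Equiv.apply_symm_apply] at this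
      · intro h i
        rw [hEapp]
        exact h _
    have hmp : MeasurePreserving E volume volume :=
      volume_measurePreserving_piCongrLeft (fun _ => Fin d → ℝ) e.symm
    have hcomp := hmp.setLIntegral_comp_preimage_emb E.measurableEmbedding F S
    rw [hpre] at hcomp
    rw [← hcomp]
    refine lintegral_congr fun p => ?_
    have h1 : ∑ i, E p i = ∑ i, p i := by
      simp only [hEapp]
      exact Equiv.sum_comp e p
    have h2 : ∏ i, b (E p i) = ∏ i, b (p i) := by
      simp only [hEapp]
      exact Equiv.prod_comp e fun i => b (p i)
    have h3 : E p (Fin.last n) = p m := by rw [hEapp, helast]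
    have h4 : (E p) ∘ Fin.castSucc = p ∘ m.succAbove := by
      funext i
      simp only [Function.comp_apply, hEapp, hecast]
    simp only [hF, hH, h1, h2, h3, h4, nnnorm_mul, ENNReal.coe_mul, mul_pow, mul_assoc]
  -- put everything together
  calc (∫⁻ p in S,
        w (∑ m, p m)
          * (‖∑ m : Fin (n + 1), g (p m) * u (p ∘ m.succAbove)‖₊ : ℝ≥0∞) ^ 2
          * ∏ m, b (p m))
      ≤ ∫⁻ p in S, ((n + 1 : ℕ) : ℝ≥0∞) * ∑ m, H m p := lintegral_mono step1
    _ = ((n + 1 : ℕ) : ℝ≥0∞) * ∑ m, ∫⁻ p in S, H m p := by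
        rw [lintegral_const_mul _ (Finset.measurable_sum Finset.univ fun m _ => hmeasH m),
          lintegral_finset_sum' _ fun m _ => (hmeasH m).aemeasurable]
    _ = ((n + 1 : ℕ) : ℝ≥0∞) * ∑ _m : Fin (n + 1), ∫⁻ p in S, F p := by
        rw [Finset.sum_congr rfl fun m _ => key m]
    _ = ((n + 1 : ℕ) : ℝ≥0∞) ^ 2 * ∫⁻ p in S, F p := by
        rw [Finset.sum_const, Finset.card_univ, Fintype.card_fin, nsmul_eq_mul, ← mul_assoc, sq]
end

section
/- Let d ≥ 1 and n ≥ 0 be integers, k ∈ {1,…,d}, and for p ∈ ℝ^d define D̂(p) := ∑_{l=1}^d (1 - cos p_l). Then for every measurable function û : ([-π,π]^d)^n → ℂ, ∫_{([-π,π]^d)^{n+1}} |∑_{m=1}^{n+1} (e^{i p_m · e_k} - 1) û(p_1,…,p_{m-1},p_{m+1},…,p_{n+1})|² · ∏_{m=1}^{n+1} D̂(p_m)^{-1} dp ≤ (n+1)² · (2(2π)^d/d) · ∫_{([-π,π]^d)^n} |û(p_1,…,p_n)|² ∏_{m=1}^{n} D̂(p_m)^{-1} dp, both sides taking values in [0,∞]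 and integrands defined to be 0 where a factor D̂ vanishes. -/
open MeasureTheory Real
open scoped ENNReal NNReal

lemma aux_sq_sum {n : ℕ} (f : Fin (n+1) → ℝ≥0) :
    (∑ i, f i)^2 ≤ (n+1 : ℝ≥0) * ∑ i, (f i)^2 := by
  have h := sq_sum_le_card_mul_sum_sq (s := (Finset.univ : Finset (Fin (n+1))))
    (f := fun i => (f i : ℝ))
  rw [← NNReal.coe_le_coe]
  push_cast
  simpa using h

lemma aux_restrict_pi (N : ℕ) {α : Type*} [MeasurableSpace α]
    (μ : Measure α) [SigmaFinite μ] (s : Set α) (hs : MeasurableSet s) :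
    (Measure.pi (fun _ : Fin N => μ)).restrict (Set.univ.pi fun _ => s) =
      Measure.pi (fun _ : Fin N => μ.restrict s) := by
  refine (Measure.pi_eq fun t ht => ?_).symm
  rw [Measure.restrict_apply (MeasurableSet.univ_pi ht), ← Set.pi_inter_distrib,
    Measure.pi_pi]
  simp [Measure.restrict_apply (ht _)]

lemma aux_onedim (d : ℕ) (hd : 1 ≤ d) (k : Fin d) :
    ∫⁻ x in Set.Icc (fun _ : Fin d => -π) (fun _ => π),
      ENNReal.ofReal (1 - Real.cos (x k)) * ENNReal.ofReal (∑ l, (1 - Real.cos (x l)))⁻¹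
      ≤ ENNReal.ofReal ((2*π)^d) / d := by
  classical
  set Box : Set (Fin d → ℝ) := Set.Icc (fun _ => -π) (fun _ => π) with hBox
  have hBoxm : MeasurableSet Box := measurableSet_Icc
  set Dd : (Fin d → ℝ) → ℝ := fun x => ∑ l, (1 - Real.cos (x l)) with hDd
  have hDm : Measurable Dd := by
    exact Finset.measurable_sum _ fun l _ =>
      measurable_const.sub (Real.continuous_cos.measurable.comp (measurable_pi_apply l))
  set F : Fin d → (Fin d → ℝ) → ℝ≥0∞ := fun l x =>
    ENNReal.ofReal (1 - Real.cos (x l)) * ENNReal.ofReal (Dd x)⁻¹ with hF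
  have hFm : ∀ l, Measurable (F l) := fun l =>
    (ENNReal.measurable_ofReal.comp
      (measurable_const.sub (Real.continuous_cos.measurable.comp (measurable_pi_apply l)))).mul
      (ENNReal.measurable_ofReal.comp hDm.inv)
  -- symmetry: all integrals equal
  have hsym : ∀ l : Fin d, (∫⁻ x in Box, F l x) = ∫⁻ x in Box, F k x := by
    intro l
    have σ := Equiv.swap k l
    set T := MeasurableEquiv.arrowCongr' (Equiv.swap k l) (MeasurableEquiv.refl ℝ) with hT
    have hTmp : MeasurePreserving T volume volume :=
      volume_preserving_arrowCongr' _ _ (MeasurePreserving.id _)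
    have hTx : ∀ x : Fin d → ℝ, T x = x ∘ (Equiv.swap k l) := by
      intro x; funext j
      simp [hT, MeasurableEquiv.arrowCongr', Equiv.arrowCongr', Equiv.arrowCongr]
    have key : ∀ x : Fin d → ℝ, Box.indicator (F l) (T x) = Box.indicator (F k) x := by
      intro x
      have hmem : T x ∈ Box ↔ x ∈ Box := by
        rw [hTx]
        constructor <;> intro h <;>
          simp only [hBox, Set.mem_Icc, Pi.le_def] at h ⊢ <;>
          constructor <;> intro j
        · simpa using h.1 (Equiv.swap k l j)
        · simpa using h.2 (Equiv.swap k l j)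
        · exact h.1 _
        · exact h.2 _
      have hD : Dd (T x) = Dd x := by
        rw [hTx, hDd]
        exact Equiv.sum_comp (Equiv.swap k l) fun j => 1 - Real.cos (x j)
      have hcos : (T x) l = x k := by
        rw [hTx]; simp [Function.comp, Equiv.swap_apply_right]
      by_cases hx : x ∈ Box
      · rw [Set.indicator_of_mem (hmem.2 hx), Set.indicator_of_mem hx, hF]
        simp only [hcos, hD]
      · rw [Set.indicator_of_notMem (fun h => hx (hmem.1 h)), Set.indicator_of_notMem hx]
    calc (∫⁻ x in Box, F l x)
        = ∫⁻ x, Box.indicator (F l) x := (lintegral_indicator hBoxm (F l)).symm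
      _ = ∫⁻ x, Box.indicator (F l) (T x) :=
          (hTmp.lintegral_comp ((hFm l).indicator hBoxm)).symm
      _ = ∫⁻ x, Box.indicator (F k) x := by simp_rw [key]
      _ = ∫⁻ x in Box, F k x := lintegral_indicator hBoxm (F k)
  -- sum bound
  have hsum : (d : ℝ≥0∞) * ∫⁻ x in Box, F k x ≤ ENNReal.ofReal ((2*π)^d) := by
    have h1 : (∑ l : Fin d, ∫⁻ x in Box, F l x) = (d : ℝ≥0∞) * ∫⁻ x in Box, F k x := by
      rw [Finset.sum_congr rfl fun l _ => hsym l]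
      simp [Finset.card_univ, mul_comm]
    rw [← h1, ← lintegral_finset_sum _ fun l _ => hFm l]
    have h2 : ∀ x : Fin d → ℝ, (∑ l, F l x) ≤ 1 := by
      intro x
      have hnn : ∀ l : Fin d, 0 ≤ 1 - Real.cos (x l) := fun l => by
        nlinarith [Real.cos_le_one (x l)]
      have : (∑ l, ENNReal.ofReal (1 - Real.cos (x l))) = ENNReal.ofReal (Dd x) := by
        rw [← ENNReal.ofReal_sum_of_nonneg fun l _ => hnn l]
      calc (∑ l, F l x) = ENNReal.ofReal (Dd x) * ENNReal.ofReal (Dd x)⁻¹ := by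
            rw [hF, ← Finset.sum_mul, this]
        _ ≤ 1 := by
            rcases le_or_gt (Dd x) 0 with h | h
            · simp [ENNReal.ofReal_of_nonpos h]
            · rw [← ENNReal.ofReal_mul h.le, mul_inv_cancel₀ h.ne', ENNReal.ofReal_one]
    calc ∫⁻ x in Box, (∑ l, F l x) ≤ ∫⁻ _ in Box, 1 := lintegral_mono h2
      _ = volume Box := by simp
      _ = ENNReal.ofReal ((2*π)^d) := by
          rw [hBox, ← Set.pi_univ_Icc, volume_pi_pi]
          simp only [Real.volume_Icc]
          rw [Finset.prod_const, Finset.card_univ, Fintype.card_fin,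
            ← ENNReal.ofReal_pow (by nlinarith [Real.pi_pos] : (0:ℝ) ≤ π - -π)]
          norm_num
          rw [show π + π = 2 * π by ring]
  have hdne : (d : ℝ≥0∞) ≠ 0 := by
    exact_mod_cast Nat.one_le_iff_ne_zero.mp hd
  rw [ENNReal.le_div_iff_mul_le (Or.inl hdne) (Or.inl (ENNReal.natCast_ne_top d))]
  rwa [mul_comm] at hsum

lemma aux_norm (t : ℝ) : ((‖Complex.exp (Complex.I * t) - 1‖₊ : ℝ≥0∞))^2
    = ENNReal.ofReal 2 * ENNReal.ofReal (1 - Real.cos t) := by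
  have h1 : ‖Complex.exp (Complex.I * t) - 1‖^2 = 2 * (1 - Real.cos t) := by
    rw [mul_comm Complex.I, Complex.exp_mul_I]
    have h2 : Complex.cos t + Complex.sin t * Complex.I - 1
        = ((Real.cos t - 1 : ℝ) : ℂ) + ((Real.sin t : ℝ) : ℂ) * Complex.I := by
      push_cast [Complex.ofReal_cos, Complex.ofReal_sin]; ring
    rw [h2, Complex.sq_norm, Complex.normSq_add_mul_I]
    nlinarith [Real.sin_sq_add_cos_sq t]
  rw [← enorm_eq_nnnorm, ← ofReal_norm_eq_enorm, ← ENNReal.ofReal_pow (norm_nonneg _), h1,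
    ENNReal.ofReal_mul (by norm_num)]

theorem stmt_9
    (d n : ℕ) (hd : 1 ≤ d) (k : Fin d)
    (D : (Fin d → ℝ) → ℝ) (hD : ∀ p, D p = ∑ l, (1 - Real.cos (p l)))
    (u : (Fin n → Fin d → ℝ) → ℂ) (hu : Measurable u) :
    (∫⁻ p in Set.univ.pi
        (fun _ : Fin (n + 1) => Set.Icc (fun _ : Fin d => -π) (fun _ : Fin d => π)),
      (‖∑ m : Fin (n + 1),
            (Complex.exp (Complex.I * (p m k)) - 1) * u (p ∘ m.succAbove)‖₊ : ℝ≥0∞) ^ 2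
        * ∏ m, ENNReal.ofReal (D (p m))⁻¹)
      ≤ ((n + 1 : ℕ) : ℝ≥0∞) ^ 2 * ENNReal.ofReal (2 * (2 * π) ^ d / d) *
        ∫⁻ p in Set.univ.pi
          (fun _ : Fin n => Set.Icc (fun _ : Fin d => -π) (fun _ : Fin d => π)),
        (‖u p‖₊ : ℝ≥0∞) ^ 2 * ∏ m, ENNReal.ofReal (D (p m))⁻¹ := by
  classical
  set Box : Set (Fin d → ℝ) := Set.Icc (fun _ => -π) (fun _ => π) with hBox
  have hBoxm : MeasurableSet Box := measurableSet_Icc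
  set ν : Measure (Fin d → ℝ) := volume.restrict Box with hν
  have hDm : Measurable D := by
    rw [funext hD]
    exact Finset.measurable_sum _ fun l _ =>
      measurable_const.sub (Real.continuous_cos.measurable.comp (measurable_pi_apply l))
  have hres : ∀ N : ℕ,
      (volume : Measure (Fin N → Fin d → ℝ)).restrict (Set.univ.pi fun _ => Box)
        = Measure.pi (fun _ : Fin N => ν) := by
    intro N
    rw [show (volume : Measure (Fin N → Fin d → ℝ)) = Measure.pi (fun _ => volume) from rfl]
    exact aux_restrict_pi N volume Box hBoxm
  -- abbreviations
  set a : Fin (n+1) → (Fin (n+1) → Fin d → ℝ) → ℂ :=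
    fun m p => (Complex.exp (Complex.I * (p m k)) - 1) * u (p ∘ m.succAbove) with ha
  set g : (Fin d → ℝ) → ℝ≥0∞ :=
    fun x => ((‖Complex.exp (Complex.I * (x k)) - 1‖₊ : ℝ≥0∞))^2
      * ENNReal.ofReal (D x)⁻¹ with hg
  set h : (Fin n → Fin d → ℝ) → ℝ≥0∞ :=
    fun q => ((‖u q‖₊ : ℝ≥0∞))^2 * ∏ j, ENNReal.ofReal (D (q j))⁻¹ with hh
  have hexp : Measurable fun x : Fin d → ℝ => Complex.exp (Complex.I * (x k)) :=
    Complex.measurable_exp.comp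
      (measurable_const.mul (Complex.measurable_ofReal.comp (measurable_pi_apply k)))
  have hgm : Measurable g :=
    ((measurable_coe_nnreal_ennreal.comp (hexp.sub measurable_const).nnnorm).pow_const 2).mul
      (ENNReal.measurable_ofReal.comp hDm.inv)
  have hhm : Measurable h :=
    ((measurable_coe_nnreal_ennreal.comp hu.nnnorm).pow_const 2).mul
      (Finset.measurable_prod _ fun j _ =>
        (ENNReal.measurable_ofReal.comp hDm.inv).comp (measurable_pi_apply j))
  have ham : ∀ m : Fin (n+1), Measurable (a m) := by
    intro m
    refine ((Complex.measurable_exp.comp (measurable_const.mul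
      (Complex.measurable_ofReal.comp ((measurable_pi_apply k).comp
        (measurable_pi_apply m))))).sub measurable_const).mul (hu.comp ?_)
    exact measurable_pi_lambda _ fun j => measurable_pi_apply _
  have hPm : Measurable fun p : Fin (n+1) → Fin d → ℝ => ∏ m, ENNReal.ofReal (D (p m))⁻¹ :=
    Finset.measurable_prod _ fun m _ =>
      (ENNReal.measurable_ofReal.comp hDm.inv).comp (measurable_pi_apply m)
  set J : ℝ≥0∞ := ∫⁻ q, h q ∂(Measure.pi fun _ : Fin n => ν) with hJ
  set K : ℝ≥0∞ := ∫⁻ x, g x ∂ν with hK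
  -- pointwise Cauchy-Schwarz
  have hpt : ∀ p : Fin (n+1) → Fin d → ℝ,
      ((‖∑ m, a m p‖₊ : ℝ≥0∞))^2 ≤ ((n:ℝ≥0∞)+1) * ∑ m, ((‖a m p‖₊ : ℝ≥0∞))^2 := by
    intro p
    have h0 : ‖∑ m, a m p‖₊ ≤ ∑ m, ‖a m p‖₊ := nnnorm_sum_le _ _
    have h1 := aux_sq_sum (fun m => ‖a m p‖₊)
    calc ((‖∑ m, a m p‖₊ : ℝ≥0∞))^2
        ≤ (((∑ m, ‖a m p‖₊ : ℝ≥0) : ℝ≥0∞))^2 := by gcongr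
      _ = ((((∑ m, ‖a m p‖₊)^2 : ℝ≥0)) : ℝ≥0∞) := by push_cast; ring
      _ ≤ ((((n+1 : ℝ≥0) * ∑ m, (‖a m p‖₊)^2 : ℝ≥0)) : ℝ≥0∞) := ENNReal.coe_le_coe.2 h1
      _ = ((n:ℝ≥0∞)+1) * ∑ m, ((‖a m p‖₊ : ℝ≥0∞))^2 := by push_cast; ring
  -- per-term Fubini factorization
  have hterm : ∀ m : Fin (n+1),
      (∫⁻ p, ((‖a m p‖₊ : ℝ≥0∞))^2 * ∏ j, ENNReal.ofReal (D (p j))⁻¹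
        ∂(Measure.pi fun _ : Fin (n+1) => ν)) = K * J := by
    intro m
    have hint : ∀ p : Fin (n+1) → Fin d → ℝ,
        ((‖a m p‖₊ : ℝ≥0∞))^2 * ∏ j, ENNReal.ofReal (D (p j))⁻¹
          = g (p m) * h (p ∘ m.succAbove) := by
      intro p
      rw [ha, hg, hh]
      simp only [nnnorm_mul, ENNReal.coe_mul, mul_pow]
      rw [Fin.prod_univ_succAbove (fun j => ENNReal.ofReal (D (p j))⁻¹) m]
      dsimp only [Function.comp]
      ring
    simp_rw [hint]
    have hm2 : Measurable fun y : (Fin d → ℝ) × (Fin n → Fin d → ℝ) => g y.1 * h y.2 :=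
      (hgm.comp measurable_fst).mul (hhm.comp measurable_snd)
    have hmp := (measurePreserving_piFinSuccAbove (fun _ : Fin (n+1) => ν) m).lintegral_comp hm2
    calc (∫⁻ p, g (p m) * h (p ∘ m.succAbove) ∂(Measure.pi fun _ : Fin (n+1) => ν))
        = ∫⁻ y : (Fin d → ℝ) × (Fin n → Fin d → ℝ), g y.1 * h y.2
            ∂(ν.prod (Measure.pi fun _ : Fin n => ν)) := hmp
      _ = K * J := lintegral_prod_mul hgm.aemeasurable hhm.aemeasurable
  -- bound on K
  have hKb : K ≤ ENNReal.ofReal (2 * (2 * π) ^ d / d) := by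
    have hg2 : ∀ x : Fin d → ℝ, g x = ENNReal.ofReal 2 *
        (ENNReal.ofReal (1 - Real.cos (x k)) *
          ENNReal.ofReal (∑ l, (1 - Real.cos (x l)))⁻¹) := by
      intro x
      simp only [hg]
      rw [aux_norm, hD x, mul_assoc]
    have hdpos : (0:ℝ) < d := by exact_mod_cast hd
    have hC : ENNReal.ofReal (2 * (2 * π) ^ d / d)
        = ENNReal.ofReal 2 * (ENNReal.ofReal ((2 * π) ^ d) / d) := by
      rw [ENNReal.ofReal_div_of_pos hdpos, ENNReal.ofReal_mul (by norm_num : (0:ℝ) ≤ 2),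
        ENNReal.ofReal_natCast, mul_div_assoc]
    have hFk : Measurable fun x : Fin d → ℝ =>
        ENNReal.ofReal (1 - Real.cos (x k)) *
          ENNReal.ofReal (∑ l, (1 - Real.cos (x l)))⁻¹ := by
      refine Measurable.mul (M := ℝ≥0∞) ?_ ?_
      · exact ENNReal.measurable_ofReal.comp (measurable_const.sub
          (Real.continuous_cos.measurable.comp (measurable_pi_apply k)))
      · exact ENNReal.measurable_ofReal.comp ((Finset.measurable_sum _ fun l _ =>
          measurable_const.sub
            (Real.continuous_cos.measurable.comp (measurable_pi_apply l))).inv)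
    rw [hK, hC]
    simp_rw [hg2]
    rw [lintegral_const_mul _ hFk]
    exact mul_le_mul_right (aux_onedim d hd k) _
  -- main chain
  rw [hres (n+1), hres n]
  calc (∫⁻ p, ((‖∑ m, a m p‖₊ : ℝ≥0∞))^2 * ∏ m, ENNReal.ofReal (D (p m))⁻¹
        ∂(Measure.pi fun _ : Fin (n+1) => ν))
      ≤ ∫⁻ p, (((n:ℝ≥0∞)+1) * ∑ m, ((‖a m p‖₊ : ℝ≥0∞))^2) * ∏ m, ENNReal.ofReal (D (p m))⁻¹
          ∂(Measure.pi fun _ : Fin (n+1) => ν) :=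
        lintegral_mono fun p => mul_le_mul_left (hpt p) _
    _ = ((n:ℝ≥0∞)+1) * ∑ m, ∫⁻ p, ((‖a m p‖₊ : ℝ≥0∞))^2 * ∏ j, ENNReal.ofReal (D (p j))⁻¹
          ∂(Measure.pi fun _ : Fin (n+1) => ν) := by
        have hmeasm : ∀ m : Fin (n+1), Measurable fun p : Fin (n+1) → Fin d → ℝ =>
            ((‖a m p‖₊ : ℝ≥0∞))^2 * ∏ j, ENNReal.ofReal (D (p j))⁻¹ := fun m =>
          ((measurable_coe_nnreal_ennreal.comp (ham m).nnnorm).pow_const 2).mul hPm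
        have hsm : Measurable fun p : Fin (n+1) → Fin d → ℝ =>
            ∑ m, ((‖a m p‖₊ : ℝ≥0∞))^2 * ∏ j, ENNReal.ofReal (D (p j))⁻¹ :=
          Finset.measurable_sum _ fun m _ => hmeasm m
        simp_rw [mul_assoc, Finset.sum_mul]
        rw [lintegral_const_mul _ hsm, lintegral_finset_sum _ fun m _ => hmeasm m]
    _ = ((n:ℝ≥0∞)+1) * ((n+1 : ℕ) * (K * J)) := by
        rw [Finset.sum_congr rfl fun m _ => hterm m, Finset.sum_const, Finset.card_univ,
          Fintype.card_fin, nsmul_eq_mul]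
    _ = ((n + 1 : ℕ) : ℝ≥0∞)^2 * K * J := by push_cast; ring
    _ ≤ ((n + 1 : ℕ) : ℝ≥0∞)^2 * ENNReal.ofReal (2 * (2 * π) ^ d / d) * J := by
        gcongr
end

section
/- Let d ≥ 1 and n ≥ 1 be integers, k ∈ {1,…,d}, and for p ∈ ℝ^d define D̂(p) := ∑_{l=1}^d (1 - cos p_l). Let û : ([-π,π]^d)^n → ℂ be measurable with ∫_{([-π,π]^d)^n} |û|² ∏_{m=1}^n D̂(p_m)^{-1} dp < ∞, and define v : ([-π,π]^d)^{n-1} → ℂ by v(p_1,…,p_{n-1}) := ∫_{[-π,π]^d} (e^{-i q·e_k} - 1) D̂(q)^{-1} û(p_1,…,p_{n-1},q) dq. Then ∫_{([-π,π]^d)^{n-1}} |v|² ∏_{m=1}^{n-1} D̂(p_m)^{-1} dp ≤ (2(2π)^d/d) · ∫_{([-π,π]^d)^n} |û|² ∏_{m=1}^{n} D̂(p_m)^{-1} dp, with integrands defined to be 0 where a factor D̂ vanishes. -/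
open MeasureTheory Real
open scoped ENNReal

namespace Stmt10Aux

variable {d : ℕ}

noncomputable def box (d : ℕ) : Set (Fin d → ℝ) :=
  Set.Icc (fun _ => -π) (fun _ => π)

lemma measurableSet_box : MeasurableSet (box d) := measurableSet_Icc

noncomputable def Dfun (d : ℕ) (q : Fin d → ℝ) : ℝ := ∑ l, (1 - Real.cos (q l))

lemma term_nonneg (x : ℝ) : 0 ≤ 1 - Real.cos x := by nlinarith [Real.cos_le_one x]

lemma Dfun_nonneg (q : Fin d → ℝ) : 0 ≤ Dfun d q :=
  Finset.sum_nonneg fun l _ => term_nonneg _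

lemma measurable_Dfun : Measurable (Dfun d) := by
  apply Finset.measurable_sum
  intro l _
  exact measurable_const.sub (Real.measurable_cos.comp (measurable_pi_apply l))

noncomputable def wfun (d : ℕ) (q : Fin d → ℝ) : ℝ≥0∞ := ENNReal.ofReal (Dfun d q)⁻¹

lemma measurable_wfun : Measurable (wfun d) :=
  ENNReal.measurable_ofReal.comp measurable_Dfun.inv

lemma measurable_term (k : Fin d) :
    Measurable fun q : Fin d → ℝ => ENNReal.ofReal (1 - Real.cos (q k)) * wfun d q :=
  (ENNReal.measurable_ofReal.comp
    (measurable_const.sub (Real.measurable_cos.comp (measurable_pi_apply k)))).mul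
    measurable_wfun

noncomputable def J (d : ℕ) (k : Fin d) : ℝ≥0∞ :=
  ∫⁻ q in box d, ENNReal.ofReal (1 - Real.cos (q k)) * wfun d q

lemma mem_box_iff (q : Fin d → ℝ) : q ∈ box d ↔ ∀ i, q i ∈ Set.Icc (-π) π := by
  rw [box, ← Set.pi_univ_Icc]
  simp [Set.mem_pi, Set.mem_Icc, Pi.le_def, forall_and]

lemma J_eq (k k' : Fin d) : J d k = J d k' := by
  classical
  set σ := Equiv.swap k k' with hσ
  have hmp := MeasureTheory.volume_measurePreserving_piCongrLeft (fun _ : Fin d => ℝ) σ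
  set e := MeasurableEquiv.piCongrLeft (fun _ : Fin d => ℝ) σ with he
  have hex : ∀ (x : Fin d → ℝ) (i : Fin d), e x i = x (σ.symm i) := by
    intro x i
    simp [he, MeasurableEquiv.piCongrLeft, Equiv.piCongrLeft_apply]
  have hFmeas : Measurable ((box d).indicator
      fun q => ENNReal.ofReal (1 - Real.cos (q k)) * wfun d q) :=
    (measurable_term k).indicator measurableSet_box
  have key := hmp.lintegral_comp hFmeas
  have hcomp : ∀ x : Fin d → ℝ,
      ((box d).indicator (fun q => ENNReal.ofReal (1 - Real.cos (q k)) * wfun d q)) (e x)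
        = ((box d).indicator
            (fun q => ENNReal.ofReal (1 - Real.cos (q k')) * wfun d q)) x := by
    intro x
    have hbox : e x ∈ box d ↔ x ∈ box d := by
      simp only [mem_box_iff, hex]
      exact ⟨fun h i => by simpa using h (σ i), fun h i => h _⟩
    have hDd : Dfun d (e x) = Dfun d x := by
      simp only [Dfun, hex]
      exact Equiv.sum_comp σ.symm fun l => 1 - Real.cos (x l)
    have hk : e x k = x k' := by
      rw [hex, hσ, Equiv.symm_swap, Equiv.swap_apply_left]
    by_cases hx : x ∈ box d
    · rw [Set.indicator_of_mem (hbox.mpr hx), Set.indicator_of_mem hx, hk, wfun, wfun, hDd]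
    · rw [Set.indicator_of_notMem (fun h => hx (hbox.mp h)), Set.indicator_of_notMem hx]
  rw [J, J, ← lintegral_indicator measurableSet_box, ← lintegral_indicator measurableSet_box,
    ← key]
  exact lintegral_congr hcomp

lemma null_Dzero (hd : 1 ≤ d) : volume {q : Fin d → ℝ | Dfun d q = 0} = 0 := by
  classical
  set k₀ : Fin d := ⟨0, hd⟩
  have hsub : {q : Fin d → ℝ | Dfun d q = 0} ⊆
      Set.univ.pi (fun l => if l = k₀ then {x : ℝ | Real.cos x = 1} else Set.univ) := by
    intro q hq l _
    by_cases h : l = k₀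
    · change q l ∈ if l = k₀ then {x : ℝ | Real.cos x = 1} else Set.univ
      rw [if_pos h]
      show Real.cos (q l) = 1
      have h1 : 1 - Real.cos (q l) ≤ Dfun d q :=
        Finset.single_le_sum (fun m _ => term_nonneg (q m)) (Finset.mem_univ l)
      have h2 := term_nonneg (q l)
      have h0 : Dfun d q = 0 := hq
      linarith
    · simp [h]
  refine measure_mono_null hsub ?_
  rw [MeasureTheory.volume_pi_pi]
  apply Finset.prod_eq_zero (Finset.mem_univ k₀)
  rw [show (if k₀ = k₀ then {x : ℝ | Real.cos x = 1} else Set.univ) = {x : ℝ | Real.cos x = 1}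
    from if_pos rfl]
  have hC : {x : ℝ | Real.cos x = 1} = Set.range (fun n : ℤ => (n : ℝ) * (2 * π)) := by
    ext x
    simp only [Set.mem_setOf_eq, Set.mem_range, Real.cos_eq_one_iff]
  rw [hC]
  exact (Set.countable_range _).measure_zero _

lemma sum_J (hd : 1 ≤ d) : ∑ k, J d k = ENNReal.ofReal ((2 * π) ^ d) := by
  rw [show ∑ k, J d k = ∫⁻ q in box d,
      ∑ k, ENNReal.ofReal (1 - Real.cos (q k)) * wfun d q from
    (lintegral_finset_sum _ fun k _ => measurable_term k).symm]
  have hpt : ∀ q : Fin d → ℝ,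
      ∑ k, ENNReal.ofReal (1 - Real.cos (q k)) * wfun d q
        = ENNReal.ofReal (Dfun d q) * wfun d q := by
    intro q
    rw [← Finset.sum_mul, ← ENNReal.ofReal_sum_of_nonneg fun l _ => term_nonneg (q l)]
    rfl
  rw [lintegral_congr hpt]
  have hae : (fun q => ENNReal.ofReal (Dfun d q) * wfun d q)
      =ᵐ[volume.restrict (box d)] fun _ => 1 := by
    refine ae_restrict_of_ae ?_
    have h0 : ∀ᵐ q : Fin d → ℝ, Dfun d q ≠ 0 := by
      rw [ae_iff]
      simpa using null_Dzero hd
    filter_upwards [h0] with q hq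
    rw [wfun, ← ENNReal.ofReal_mul (Dfun_nonneg q), mul_inv_cancel₀ hq, ENNReal.ofReal_one]
  rw [lintegral_congr_ae hae, setLIntegral_one]
  rw [box, Real.volume_Icc_pi]
  simp only [sub_neg_eq_add]
  rw [Finset.prod_const, Finset.card_univ, Fintype.card_fin,
    ← ENNReal.ofReal_pow (by positivity : (0:ℝ) ≤ π + π)]
  congr 1
  ring

lemma J_val (hd : 1 ≤ d) (k : Fin d) : J d k = ENNReal.ofReal ((2 * π) ^ d) / d := by
  have hsum := sum_J (d := d) hd
  have hconst : ∑ k' : Fin d, J d k' = d * J d k := by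
    rw [Finset.sum_congr rfl fun k' _ => J_eq k' k]
    simp [Finset.sum_const, Finset.card_univ, nsmul_eq_mul]
  rw [hconst] at hsum
  rw [ENNReal.eq_div_iff (by exact_mod_cast Nat.cast_ne_zero.2 (by omega : d ≠ 0))
    (ENNReal.natCast_ne_top d)]
  exact hsum

lemma key_integral (hd : 1 ≤ d) (k : Fin d) :
    ∫⁻ q in box d, ENNReal.ofReal (2 * (1 - Real.cos (q k))) * wfun d q
      = ENNReal.ofReal (2 * (2 * π) ^ d / d) := by
  have hpt : ∀ q : Fin d → ℝ, ENNReal.ofReal (2 * (1 - Real.cos (q k))) * wfun d q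
      = 2 * (ENNReal.ofReal (1 - Real.cos (q k)) * wfun d q) := by
    intro q
    rw [ENNReal.ofReal_mul (by norm_num : (0:ℝ) ≤ 2), mul_assoc]
    norm_num
  rw [lintegral_congr hpt, lintegral_const_mul 2 (measurable_term k)]
  rw [show (∫⁻ q in box d, ENNReal.ofReal (1 - Real.cos (q k)) * wfun d q) = J d k from rfl,
    J_val hd k]
  have hd' : (0:ℝ) < d := by exact_mod_cast hd
  rw [ENNReal.ofReal_div_of_pos hd', ENNReal.ofReal_mul (by norm_num : (0:ℝ) ≤ 2),
    ENNReal.ofReal_natCast]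
  rw [← mul_div_assoc]
  norm_num


lemma norm_c_sq (x : ℝ) :
    (‖Complex.exp (-(Complex.I * x)) - 1‖₊ : ℝ≥0∞) ^ 2
      = ENNReal.ofReal (2 * (1 - Real.cos x)) := by
  rw [← enorm_eq_nnnorm, ← ofReal_norm, ← ENNReal.ofReal_pow (norm_nonneg _)]
  congr 1
  rw [Complex.sq_norm, Complex.normSq_apply]
  simp only [Complex.sub_re, Complex.sub_im, Complex.one_re, Complex.one_im,
    Complex.exp_re, Complex.exp_im, Complex.neg_re, Complex.neg_im,
    Complex.mul_re, Complex.mul_im, Complex.I_re, Complex.I_im,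
    Complex.ofReal_re, Complex.ofReal_im]
  norm_num [Real.exp_zero, Real.cos_neg, Real.sin_neg]
  nlinarith [Real.sin_sq_add_cos_sq x]

lemma pi_restrict {ι : Type*} [Fintype ι] {α : ι → Type*} [∀ i, MeasurableSpace (α i)]
    (μ : ∀ i, Measure (α i)) [∀ i, SigmaFinite (μ i)] (s : ∀ i, Set (α i))
    [∀ i, SigmaFinite ((μ i).restrict (s i))]
    (hs : ∀ i, MeasurableSet (s i)) :
    (Measure.pi μ).restrict (Set.univ.pi s) = Measure.pi (fun i => (μ i).restrict (s i)) := by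
  refine (Measure.pi_eq fun t ht => ?_).symm
  rw [Measure.restrict_apply (MeasurableSet.univ_pi ht), ← Set.pi_inter_distrib,
    Measure.pi_pi]
  exact Finset.prod_congr rfl fun i _ => (Measure.restrict_apply (ht i)).symm

end Stmt10Aux

open Stmt10Aux

theorem stmt_10
    (d n : ℕ) (hd : 1 ≤ d) (k : Fin d)
    (D : (Fin d → ℝ) → ℝ) (hD : ∀ p, D p = ∑ l, (1 - Real.cos (p l)))
    (u : (Fin (n + 1) → Fin d → ℝ) → ℂ) (hu : Measurable u)
    (hfin : (∫⁻ p in Set.univ.pi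
        (fun _ : Fin (n + 1) => Set.Icc (fun _ : Fin d => -π) (fun _ : Fin d => π)),
      (‖u p‖₊ : ℝ≥0∞) ^ 2 * ∏ m, ENNReal.ofReal (D (p m))⁻¹) < ⊤)
    (v : (Fin n → Fin d → ℝ) → ℂ)
    (hv : ∀ p, v p = ∫ q in Set.Icc (fun _ : Fin d => -π) (fun _ : Fin d => π),
      (Complex.exp (-(Complex.I * (q k))) - 1) * ((D q)⁻¹ : ℝ) * u (Fin.snoc p q)) :
    (∫⁻ p in Set.univ.pi
        (fun _ : Fin n => Set.Icc (fun _ : Fin d => -π) (fun _ : Fin d => π)),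
      (‖v p‖₊ : ℝ≥0∞) ^ 2 * ∏ m, ENNReal.ofReal (D (p m))⁻¹)
      ≤ ENNReal.ofReal (2 * (2 * π) ^ d / d) *
        ∫⁻ p in Set.univ.pi
          (fun _ : Fin (n + 1) => Set.Icc (fun _ : Fin d => -π) (fun _ : Fin d => π)),
        (‖u p‖₊ : ℝ≥0∞) ^ 2 * ∏ m, ENNReal.ofReal (D (p m))⁻¹ := by
  classical
  clear hfin
  have hDD : D = Dfun d := funext fun q => hD q
  subst hDD
  set μ : Measure (Fin d → ℝ) := volume.restrict (box d) with hμ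
  -- identify restricted volumes with product measures
  have hres : ∀ m : ℕ,
      (volume : Measure (Fin m → Fin d → ℝ)).restrict
        (Set.univ.pi fun _ : Fin m => Set.Icc (fun _ : Fin d => -π) (fun _ : Fin d => π))
        = Measure.pi (fun _ : Fin m => μ) := by
    intro m
    rw [MeasureTheory.volume_pi]
    exact pi_restrict (fun _ => volume) _ fun _ => measurableSet_Icc
  rw [hres n, hres (n + 1)]
  have wfun_eq : ∀ q : Fin d → ℝ, ENNReal.ofReal (Dfun d q)⁻¹ = wfun d q := fun _ => rfl
  simp only [wfun_eq]
  -- notation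
  set W : (Fin n → Fin d → ℝ) → ℝ≥0∞ := fun r => ∏ m, wfun d (r m) with hW
  set K : ℝ≥0∞ := ENNReal.ofReal (2 * (2 * π) ^ d / d) with hK
  set G : (Fin n → Fin d → ℝ) → ℝ≥0∞ :=
    fun r => ∫⁻ q, wfun d q * (‖u (Fin.snoc r q)‖₊ : ℝ≥0∞) ^ 2 ∂μ with hG
  -- measurability helpers
  set e := MeasurableEquiv.piFinSuccAbove (fun _ : Fin (n + 1) => Fin d → ℝ) (Fin.last n)
    with he
  have hesymm : ∀ y : (Fin d → ℝ) × (Fin n → Fin d → ℝ), e.symm y = Fin.snoc y.2 y.1 := by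
    intro y; cases y
    simp [he, MeasurableEquiv.piFinSuccAbove, Fin.insertNth_last', Fin.snocEquiv]
  have hmeasF : Measurable (fun p : Fin (n + 1) → Fin d → ℝ =>
      (‖u p‖₊ : ℝ≥0∞) ^ 2 * ∏ m, wfun d (p m)) := by
    apply Measurable.mul
    · exact (measurable_coe_nnreal_ennreal.comp hu.nnnorm).pow_const 2
    · exact Finset.measurable_prod _ fun m _ => measurable_wfun.comp (measurable_pi_apply m)
  have hsnoc_meas : Measurable
      (fun y : (Fin d → ℝ) × (Fin n → Fin d → ℝ) =>
        (Fin.snoc y.2 y.1 : Fin (n + 1) → Fin d → ℝ)) := by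
    have h := e.symm.measurable
    rwa [show (⇑e.symm : _ → Fin (n + 1) → Fin d → ℝ)
      = fun y => Fin.snoc y.2 y.1 from funext hesymm] at h
  -- Fubini
  have fub : (∫⁻ p, (‖u p‖₊ : ℝ≥0∞) ^ 2 * ∏ m, wfun d (p m)
          ∂Measure.pi (fun _ : Fin (n + 1) => μ))
      = ∫⁻ r, (∫⁻ q, (‖u (Fin.snoc r q)‖₊ : ℝ≥0∞) ^ 2 * (W r * wfun d q) ∂μ)
          ∂Measure.pi (fun _ : Fin n => μ) := by
    have hmp := measurePreserving_piFinSuccAbove (fun _ : Fin (n + 1) => μ) (Fin.last n)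
    have h1 := (hmp.symm e).lintegral_comp hmeasF
    rw [← h1]
    have hFc : Measurable fun a : (Fin d → ℝ) × (Fin n → Fin d → ℝ) =>
        (‖u (e.symm a)‖₊ : ℝ≥0∞) ^ 2 * ∏ m, wfun d (e.symm a m) :=
      hmeasF.comp e.symm.measurable
    refine (lintegral_prod _ hFc.aemeasurable).trans ?_
    refine (lintegral_lintegral_swap (μ := μ) (ν := Measure.pi fun _ : Fin n => μ)
      (f := fun x y => (‖u (e.symm (x, y))‖₊ : ℝ≥0∞) ^ 2 * ∏ m, wfun d (e.symm (x, y) m))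
      (by exact (hFc.comp (measurable_fst.prodMk measurable_snd)).aemeasurable)).trans ?_
    refine lintegral_congr fun r => lintegral_congr fun q => ?_
    rw [hesymm (q, r)]
    simp only [Fin.prod_univ_castSucc, Fin.snoc_castSucc, Fin.snoc_last]
    rfl
  -- rpow helpers
  have hsq : ∀ x : ℝ≥0∞, (x ^ (1 / (2:ℝ))) ^ 2 = x := by
    intro x
    rw [← ENNReal.rpow_natCast (x ^ (1 / (2:ℝ))) 2, ← ENNReal.rpow_mul]
    norm_num
  have hrpow2 : ∀ x : ℝ≥0∞, x ^ (2:ℝ) = x ^ 2 := by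
    intro x
    rw [show (2:ℝ) = ((2:ℕ):ℝ) by norm_num, ENNReal.rpow_natCast]
  set c : (Fin d → ℝ) → ℂ := fun q => Complex.exp (-(Complex.I * (q k))) - 1 with hc
  have hc_meas : Measurable c := by
    apply Measurable.sub _ measurable_const
    exact Complex.measurable_exp.comp
      ((measurable_const.mul (Complex.measurable_ofReal.comp (measurable_pi_apply k))).neg)
  set sq2 : (Fin d → ℝ) → ℝ≥0∞ := fun q => ENNReal.ofReal (Real.sqrt (Dfun d q)⁻¹) with hsq2
  have hs_meas : Measurable sq2 :=
    ENNReal.measurable_ofReal.comp (Real.continuous_sqrt.measurable.comp measurable_Dfun.inv)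
  have hss : ∀ q, sq2 q * sq2 q = wfun d q := by
    intro q
    rw [hsq2]
    dsimp only
    rw [← ENNReal.ofReal_mul (Real.sqrt_nonneg _),
      Real.mul_self_sqrt (inv_nonneg.2 (Dfun_nonneg q))]
    rfl
  have hW_ne : ∀ r : Fin n → Fin d → ℝ, W r ≠ ⊤ := by
    intro r
    rw [hW]
    exact (ENNReal.prod_lt_top fun m _ => ENNReal.ofReal_lt_top).ne
  -- pointwise Cauchy-Schwarz
  have hCS : ∀ r : Fin n → Fin d → ℝ, (‖v r‖₊ : ℝ≥0∞) ^ 2 ≤ K * G r := by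
    intro r
    have husnoc : Measurable fun q : Fin d → ℝ => u (Fin.snoc r q) :=
      hu.comp (hsnoc_meas.comp (measurable_id.prodMk measurable_const))
    have hA : Measurable fun q : Fin d → ℝ => (‖c q‖₊ : ℝ≥0∞) * sq2 q :=
      (measurable_coe_nnreal_ennreal.comp hc_meas.nnnorm).mul hs_meas
    have hB : Measurable fun q : Fin d → ℝ => sq2 q * (‖u (Fin.snoc r q)‖₊ : ℝ≥0∞) :=
      hs_meas.mul (measurable_coe_nnreal_ennreal.comp husnoc.nnnorm)
    have hnorm : ∀ q : Fin d → ℝ,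
        (‖c q * ((Dfun d q)⁻¹ : ℝ) * u (Fin.snoc r q)‖₊ : ℝ≥0∞)
          = ((‖c q‖₊ : ℝ≥0∞) * sq2 q) * (sq2 q * (‖u (Fin.snoc r q)‖₊ : ℝ≥0∞)) := by
      intro q
      rw [nnnorm_mul, nnnorm_mul, ENNReal.coe_mul, ENNReal.coe_mul]
      have hmid : (‖(((Dfun d q)⁻¹ : ℝ) : ℂ)‖₊ : ℝ≥0∞) = wfun d q := by
        rw [Complex.nnnorm_real, ← enorm_eq_nnnorm, Real.enorm_eq_ofReal (inv_nonneg.2 (Dfun_nonneg q))]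
        rfl
      rw [hmid, ← hss q]
      ring
    have h0 : (‖v r‖₊ : ℝ≥0∞) ≤
        ∫⁻ q, ((‖c q‖₊ : ℝ≥0∞) * sq2 q) * (sq2 q * (‖u (Fin.snoc r q)‖₊ : ℝ≥0∞)) ∂μ := by
      have hv' : v r = ∫ q, c q * ((Dfun d q)⁻¹ : ℝ) * u (Fin.snoc r q) ∂μ := hv r
      rw [hv']
      refine le_trans (enorm_integral_le_lintegral_enorm _) ?_
      exact le_of_eq (lintegral_congr hnorm)
    have holder := ENNReal.lintegral_mul_le_Lp_mul_Lq μ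
      (Real.HolderConjugate.two_two : Real.HolderConjugate 2 2) hA.aemeasurable hB.aemeasurable
    have holder' : (∫⁻ q, ((‖c q‖₊ : ℝ≥0∞) * sq2 q) * (sq2 q * (‖u (Fin.snoc r q)‖₊ : ℝ≥0∞)) ∂μ)
        ≤ (∫⁻ q, ((‖c q‖₊ : ℝ≥0∞) * sq2 q) ^ (2:ℝ) ∂μ) ^ (1 / (2:ℝ)) *
          (∫⁻ q, (sq2 q * (‖u (Fin.snoc r q)‖₊ : ℝ≥0∞)) ^ (2:ℝ) ∂μ) ^ (1 / (2:ℝ)) := by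
      simpa [Pi.mul_apply] using holder
    have hA2 : (∫⁻ q, ((‖c q‖₊ : ℝ≥0∞) * sq2 q) ^ (2:ℝ) ∂μ) = K := by
      have hpt : ∀ q : Fin d → ℝ, ((‖c q‖₊ : ℝ≥0∞) * sq2 q) ^ (2:ℝ)
          = ENNReal.ofReal (2 * (1 - Real.cos (q k))) * wfun d q := by
        intro q
        rw [hrpow2, mul_pow, pow_two (sq2 q), hss q]
        congr 1
        simp only [hc]
        exact norm_c_sq (q k)
      rw [lintegral_congr hpt, hμ, hK]
      exact key_integral hd k
    have hB2 : (∫⁻ q, (sq2 q * (‖u (Fin.snoc r q)‖₊ : ℝ≥0∞)) ^ (2:ℝ) ∂μ) = G r := by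
      have hpt : ∀ q : Fin d → ℝ, (sq2 q * (‖u (Fin.snoc r q)‖₊ : ℝ≥0∞)) ^ (2:ℝ)
          = wfun d q * (‖u (Fin.snoc r q)‖₊ : ℝ≥0∞) ^ 2 := by
        intro q
        rw [hrpow2, mul_pow, pow_two (sq2 q), hss q]
      rw [lintegral_congr hpt, hG]
    calc (‖v r‖₊ : ℝ≥0∞) ^ 2
        ≤ (∫⁻ q, ((‖c q‖₊ : ℝ≥0∞) * sq2 q) * (sq2 q * (‖u (Fin.snoc r q)‖₊ : ℝ≥0∞)) ∂μ) ^ 2 := by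
          rw [pow_two, pow_two]; exact mul_le_mul' h0 h0
      _ ≤ ((∫⁻ q, ((‖c q‖₊ : ℝ≥0∞) * sq2 q) ^ (2:ℝ) ∂μ) ^ (1 / (2:ℝ)) *
            (∫⁻ q, (sq2 q * (‖u (Fin.snoc r q)‖₊ : ℝ≥0∞)) ^ (2:ℝ) ∂μ) ^ (1 / (2:ℝ))) ^ 2 := by
          rw [pow_two, pow_two]; exact mul_le_mul' holder' holder'
      _ = K * G r := by rw [mul_pow, hsq, hsq, hA2, hB2]
  -- assembly
  calc (∫⁻ r, (‖v r‖₊ : ℝ≥0∞) ^ 2 * ∏ m, wfun d (r m) ∂Measure.pi fun _ : Fin n => μ)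
      ≤ ∫⁻ r, K * (G r * W r) ∂Measure.pi fun _ : Fin n => μ := by
        refine lintegral_mono fun r => ?_
        calc (‖v r‖₊ : ℝ≥0∞) ^ 2 * ∏ m, wfun d (r m)
            = (‖v r‖₊ : ℝ≥0∞) ^ 2 * W r := rfl
          _ ≤ (K * G r) * W r := mul_le_mul_left (hCS r) _
          _ = K * (G r * W r) := mul_assoc _ _ _
    _ = K * ∫⁻ r, G r * W r ∂Measure.pi fun _ : Fin n => μ :=
        lintegral_const_mul' K _ (hK ▸ ENNReal.ofReal_ne_top)
    _ = K * ∫⁻ r, (∫⁻ q, (‖u (Fin.snoc r q)‖₊ : ℝ≥0∞) ^ 2 * (W r * wfun d q) ∂μ)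
          ∂Measure.pi fun _ : Fin n => μ := by
        congr 1
        refine lintegral_congr fun r => ?_
        calc G r * W r
            = W r * ∫⁻ q, wfun d q * (‖u (Fin.snoc r q)‖₊ : ℝ≥0∞) ^ 2 ∂μ := by
              rw [hG]; exact mul_comm _ _
          _ = ∫⁻ q, W r * (wfun d q * (‖u (Fin.snoc r q)‖₊ : ℝ≥0∞) ^ 2) ∂μ :=
              (lintegral_const_mul' _ _ (hW_ne r)).symm
          _ = ∫⁻ q, (‖u (Fin.snoc r q)‖₊ : ℝ≥0∞) ^ 2 * (W r * wfun d q) ∂μ :=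
              lintegral_congr fun q => by ring
    _ = K * ∫⁻ p, (‖u p‖₊ : ℝ≥0∞) ^ 2 * ∏ m, wfun d (p m)
          ∂Measure.pi fun _ : Fin (n + 1) => μ := by rw [fub]
end

section
/- Let c > 0 and Z ≥ 0 be real constants, let d ≥ 1 be real, and let a, m : ℕ → [0,∞) be sequences with a(0) = 0, a(n) ≤ (cd)^{-1} n² a(n-1) + c^{-1} n² m(n-1)² for every n ≥ 1, and m(j) ≤ Z · 2^{j/2} · ⌊j/2⌋! · c^{-j/2} for every j ≥ 0. Then for every n ≥ 0, a(n) ≤ Z² · (n!)² · (2/c)^n. -/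
theorem stmt_12
    (c Z d : ℝ) (hc : 0 < c) (hZ : 0 ≤ Z) (hd : 1 ≤ d)
    (a m : ℕ → ℝ) (ha : ∀ n, 0 ≤ a n) (hm : ∀ n, 0 ≤ m n)
    (ha0 : a 0 = 0)
    (hrec : ∀ n, 1 ≤ n →
      a n ≤ (c * d)⁻¹ * n ^ 2 * a (n - 1) + c⁻¹ * n ^ 2 * m (n - 1) ^ 2)
    (hmom : ∀ j : ℕ,
      m j ≤ Z * (2 : ℝ) ^ ((j : ℝ) / 2) * (Nat.factorial (j / 2) : ℝ)
              * c ^ (-(j : ℝ) / 2)) :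
    ∀ n : ℕ, a n ≤ Z ^ 2 * (Nat.factorial n : ℝ) ^ 2 * (2 / c) ^ n := by
  intro n
  induction n with
  | zero => simp [ha0]; positivity
  | succ k ih =>
    have hn := hrec (k + 1) (Nat.le_add_left 1 k)
    simp only [Nat.add_sub_cancel] at hn
    set B : ℝ := Z ^ 2 * (Nat.factorial k : ℝ) ^ 2 * (2 / c) ^ k with hB
    have hBnn : 0 ≤ B := by positivity
    -- squared moment bound
    have hsq : ((2 : ℝ) ^ ((k : ℝ) / 2)) ^ 2 * ((c : ℝ) ^ (-(k : ℝ) / 2)) ^ 2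
        = (2 / c) ^ k := by
      rw [sq, sq, ← Real.rpow_add two_pos, ← Real.rpow_add hc]
      have h1 : (k : ℝ) / 2 + (k : ℝ) / 2 = (k : ℝ) := by ring
      have h2 : -(k : ℝ) / 2 + -(k : ℝ) / 2 = -(k : ℝ) := by ring
      rw [h1, h2, Real.rpow_neg hc.le, Real.rpow_natCast, Real.rpow_natCast,
        div_pow, ← inv_pow]
      ring
    have hfle : (Nat.factorial (k / 2) : ℝ) ≤ (Nat.factorial k : ℝ) := by
      exact_mod_cast Nat.factorial_le (Nat.div_le_self k 2)
    have hmb : m k ^ 2 ≤ B := by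
      have h1 := hmom k
      have h2 : m k ^ 2 ≤ (Z * (2 : ℝ) ^ ((k : ℝ) / 2) * (Nat.factorial (k / 2) : ℝ)
          * c ^ (-(k : ℝ) / 2)) ^ 2 := pow_le_pow_left₀ (hm k) h1 2
      calc m k ^ 2 ≤ _ := h2
        _ = Z ^ 2 * (Nat.factorial (k / 2) : ℝ) ^ 2
              * (((2 : ℝ) ^ ((k : ℝ) / 2)) ^ 2 * ((c : ℝ) ^ (-(k : ℝ) / 2)) ^ 2) := by ring
        _ = Z ^ 2 * (Nat.factorial (k / 2) : ℝ) ^ 2 * (2 / c) ^ k := by rw [hsq]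
        _ ≤ B := by
            rw [hB]
            gcongr
    have hcd : (c * d)⁻¹ ≤ c⁻¹ := by
      rw [mul_inv]
      have : d⁻¹ ≤ 1 := inv_le_one_of_one_le₀ hd
      nlinarith [inv_pos.mpr hc]
    have hstep : a (k + 1) ≤ c⁻¹ * ((k : ℝ) + 1) ^ 2 * B + c⁻¹ * ((k : ℝ) + 1) ^ 2 * B := by
      have h1 : (c * d)⁻¹ * ((k : ℝ) + 1) ^ 2 * a k ≤ c⁻¹ * ((k : ℝ) + 1) ^ 2 * B := by
        have hcd2 : (c * d)⁻¹ * ((k : ℝ) + 1) ^ 2 ≤ c⁻¹ * ((k : ℝ) + 1) ^ 2 :=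
          mul_le_mul_of_nonneg_right hcd (by positivity)
        calc (c * d)⁻¹ * ((k : ℝ) + 1) ^ 2 * a k
            ≤ c⁻¹ * ((k : ℝ) + 1) ^ 2 * a k := mul_le_mul_of_nonneg_right hcd2 (ha k)
          _ ≤ c⁻¹ * ((k : ℝ) + 1) ^ 2 * B := mul_le_mul_of_nonneg_left ih (by positivity)
      have h2 : c⁻¹ * ((k : ℝ) + 1) ^ 2 * m k ^ 2 ≤ c⁻¹ * ((k : ℝ) + 1) ^ 2 * B := by
        have hcn : (0 : ℝ) ≤ c⁻¹ * ((k : ℝ) + 1) ^ 2 := by positivity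
        exact mul_le_mul_of_nonneg_left hmb hcn
      have := hn
      push_cast at this ⊢
      linarith
    calc a (k + 1) ≤ _ := hstep
      _ = Z ^ 2 * (((k : ℝ) + 1) * (Nat.factorial k : ℝ)) ^ 2 * ((2 / c) ^ k * (2 / c)) := by
          rw [hB]; field_simp; ring
      _ = Z ^ 2 * (Nat.factorial (k + 1) : ℝ) ^ 2 * (2 / c) ^ (k + 1) := by
          rw [Nat.factorial_succ, pow_succ]; push_cast; ring
end
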